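/- For every integer l ≥ 0, the sequences (2, (5)^{[l]}) and ((3, 2, 2)^{[l]}, 2) are complementary; that is, 1/[2, 5, …, 5]^- (with l fives) + 1/[3, 2, 2, 3, 2, 2, …, 3, 2, 2, 2]^- (the block 3, 2, 2 repeated l times followed by a final 2) = 1. -/

import Mathlib

/-- Negative continued fraction `[a₁, …, aₙ]⁻`. -/
def ncf : List ℚ → ℚ
  | [] => 0
  | [a] => a
  | a :: b :: l => a - 1 / ncf (b :: l)

/-- Negative continued fraction of a list of integers. -/
def ncfZ (l : List ℤ) : ℚ := ncf (l.map (fun x => (x : ℚ)))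

/-- Two sequences of integers, all ≥ 2, are complementary if the reciprocals of their
negative continued fractions sum to 1. -/
def Complementary (a b : List ℤ) : Prop :=
  a ≠ [] ∧ b ≠ [] ∧ (∀ x ∈ a, 2 ≤ x) ∧ (∀ x ∈ b, 2 ≤ x) ∧
    1 / ncfZ a + 1 / ncfZ b = 1

/-- The standard negative definite bilinear form on `ℤ^N`. -/
def negForm {N : ℕ} (x y : Fin N → ℤ) : ℤ := -∑ i, x i * y i

/-- Auxiliary sequence: 0, 1, 5, 24, 115, … -/
def qs : ℕ → ℤ
  | 0 => 0
  | 1 => 1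
  | n + 2 => 5 * qs (n + 1) - qs n

lemma qs_rec (n : ℕ) : qs (n + 2) = 5 * qs (n + 1) - qs n := rfl

lemma qs_mono (n : ℕ) : 0 ≤ qs n ∧ qs n < qs (n + 1) := by
  induction n with
  | zero => simp [qs]
  | succ n ih =>
    have h : qs (n + 1 + 1) = 5 * qs (n + 1) - qs n := rfl
    omega

lemma qs_pos (n : ℕ) : 0 < qs (n + 1) := by
  have h1 := qs_mono n
  omega

lemma ncf_cons' (a : ℚ) (l : List ℚ) (hl : l ≠ []) : ncf (a :: l) = a - 1 / ncf l := by
  cases l with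
  | nil => exact absurd rfl hl
  | cons b t => rfl

lemma ncfZ_cons (a : ℤ) (l : List ℤ) (hl : l ≠ []) : ncfZ (a :: l) = a - 1 / ncfZ l := by
  show ncf ((a : ℚ) :: l.map (fun x => (x : ℚ))) = a - 1 / ncfZ l
  rw [ncf_cons' _ _ (by cases l with | nil => exact absurd rfl hl | cons b t => simp)]
  rfl

lemma ncf_five (l : ℕ) :
    ncfZ (List.replicate (l + 1) (5 : ℤ)) = (qs (l + 2) : ℚ) / (qs (l + 1) : ℚ) := by
  induction l with
  | zero => norm_num [ncfZ, ncf, qs]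
  | succ l ih =>
    rw [List.replicate_succ, ncfZ_cons _ _ (by simp), ih]
    have h1 : ((qs (l + 1) : ℚ)) ≠ 0 := by exact_mod_cast (qs_pos l).ne'
    have h2 : ((qs (l + 2) : ℚ)) ≠ 0 := by exact_mod_cast (qs_pos (l + 1)).ne'
    have e : qs (l + 1 + 2) = 5 * qs (l + 2) - qs (l + 1) := qs_rec (l + 1)
    rw [e]
    push_cast
    rw [one_div_div]
    field_simp

lemma ncf_A (l : ℕ) :
    ncfZ ((2 : ℤ) :: List.replicate l 5)
      = (2 * (qs (l + 1) : ℚ) - qs l) / (qs (l + 1) : ℚ) := by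
  cases l with
  | zero => norm_num [ncfZ, ncf, qs]
  | succ l =>
    have h1 : ((qs (l + 1) : ℚ)) ≠ 0 := by exact_mod_cast (qs_pos l).ne'
    have h2 : ((qs (l + 2) : ℚ)) ≠ 0 := by exact_mod_cast (qs_pos (l + 1)).ne'
    rw [ncfZ_cons _ _ (by simp), ncf_five l]
    push_cast
    rw [one_div_div]
    field_simp

lemma ncf_B (l : ℕ) :
    ncfZ ((List.replicate l [(3 : ℤ), 2, 2]).flatten ++ [2])
      = (2 * (qs (l + 1) : ℚ) - qs l) / ((qs (l + 1) : ℚ) - qs l) := by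
  induction l with
  | zero => norm_num [ncfZ, ncf, qs]
  | succ l ih =>
    have hb := qs_mono l
    have hba : (qs l : ℚ) < (qs (l + 1) : ℚ) := by exact_mod_cast hb.2
    have hb0 : (0 : ℚ) ≤ (qs l : ℚ) := by exact_mod_cast hb.1
    set a : ℚ := (qs (l + 1) : ℚ) with ha'
    set b : ℚ := (qs l : ℚ) with hb'
    have hD : a - b ≠ 0 := by linarith
    have hN : 2 * a - b ≠ 0 := by linarith
    have h3 : 3 * a - b ≠ 0 := by linarith
    have h4 : 4 * a - b ≠ 0 := by linarith
    have hrw : (List.replicate (l + 1) [(3 : ℤ), 2, 2]).flatten ++ [2]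
        = 3 :: 2 :: 2 :: ((List.replicate l [(3 : ℤ), 2, 2]).flatten ++ [2]) := by
      rw [List.replicate_succ, List.flatten_cons]; simp
    rw [hrw, ncfZ_cons _ _ (by simp), ncfZ_cons _ _ (by simp), ncfZ_cons _ _ (by simp), ih]
    have e : qs (l + 1 + 1) = 5 * qs (l + 1) - qs l := qs_rec l
    rw [e]
    push_cast
    rw [← ha', ← hb']
    have s1 : (2 : ℚ) - 1 / ((2 * a - b) / (a - b)) = (3 * a - b) / (2 * a - b) := by
      rw [one_div_div]; field_simp; ring
    have s2 : (2 : ℚ) - 1 / ((3 * a - b) / (2 * a - b)) = (4 * a - b) / (3 * a - b) := by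
      rw [one_div_div, eq_div_iff h3, sub_mul, div_mul_cancel₀ _ h3]; ring
    have s3 : (3 : ℚ) - 1 / ((4 * a - b) / (3 * a - b)) = (9 * a - 2 * b) / (4 * a - b) := by
      rw [one_div_div, eq_div_iff h4, sub_mul, div_mul_cancel₀ _ h4]; ring
    rw [s1, s2, s3]
    congr 1 <;> ring

theorem complementary_two_fives (l : ℕ) :
    Complementary ((2 : ℤ) :: List.replicate l 5)
      ((List.replicate l [(3 : ℤ), 2, 2]).flatten ++ [2]) := by
  refine ⟨by simp, by simp, ?_, ?_, ?_⟩
  · intro x hx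
    simp [List.mem_replicate] at hx
    rcases hx with h | ⟨-, h⟩ <;> omega
  · intro x hx
    simp [List.mem_flatten, List.mem_replicate] at hx
    rcases hx with ⟨-, hxL⟩ | h
    · rcases hxL with h | h <;> omega
    · omega
  · rw [ncf_A l, ncf_B l]
    have hb := qs_mono l
    have hba : (qs l : ℚ) < (qs (l + 1) : ℚ) := by exact_mod_cast hb.2
    have hb0 : (0 : ℚ) ≤ (qs l : ℚ) := by exact_mod_cast hb.1
    set a : ℚ := (qs (l + 1) : ℚ)
    set b : ℚ := (qs l : ℚ)
    have hN : 2 * a - b ≠ 0 := by linarith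
    rw [one_div_div, one_div_div, ← add_div]
    rw [show a + (a - b) = 2 * a - b by ring, div_self hN]
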